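/- For all belief correspondences P_1, …, P_n on a nonempty set of states Ω and every event E ⊆ Ω, the common belief event satisfies □*E = ⋃{ F ⊆ Ω | F ⊆ □(E ∩ F) }. -/
import Mathlib


/-!
Possibility correspondences on a nonempty set of states `Ω`.
`□E = {ω | ∀ i, P i ω ⊆ E}`, `□^(k+1) E = □(□^k E)`, and the common belief
event is `□*E = ⋂_{k ≥ 1} □^k E`.
-/

open Set

/-- `□E`: the event that every player believes (knows) the event `E`. -/
def box {ι Ω : Type*} (P : ι → Ω → Set Ω) (E : Set Ω) : Set Ω :=
  {ω | ∀ i, P i ω ⊆ E}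

/-- `□*E`: the common belief event, `⋂_{k ≥ 1} □^k E`. -/
def commonBelief {ι Ω : Type*} (P : ι → Ω → Set Ω) (E : Set Ω) : Set Ω :=
  ⋂ k : ℕ, (box P)^[k + 1] E

/-- for all belief correspondences `P_1, …, P_n` on a nonempty set of
states `Ω` and every event `E`, the common belief event satisfies
`□*E = ⋃ {F ⊆ Ω | F ⊆ □(E ∩ F)}`. -/
theorem commonBelief_eq_sUnion {ι Ω : Type*} [Nonempty Ω] (P : ι → Ω → Set Ω)
    (hP1 : ∀ i ω, (P i ω).Nonempty)
    (hP2 : ∀ i ω ω', ω' ∈ P i ω → P i ω' = P i ω)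
    (E : Set Ω) :
    commonBelief P E = ⋃₀ {F : Set Ω | F ⊆ box P (E ∩ F)} := by
  have box_mono : ∀ A B : Set Ω, A ⊆ B → box P A ⊆ box P B :=
    fun A B h ω hω i => (hω i).trans h
  ext ω
  constructor
  · intro hω
    refine ⟨commonBelief P E, ?_, hω⟩
    intro ω' hω' i x hx
    have hmem : ∀ k : ℕ, ω' ∈ (box P)^[k + 1] E := fun k =>
      mem_iInter.mp hω' k
    constructor
    · exact (hmem 0) i hx
    · refine mem_iInter.mpr fun k => ?_
      have h2 : ω' ∈ (box P)^[k + 2] E := hmem (k + 1)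
      rw [Function.iterate_succ_apply'] at h2
      exact h2 i hx
  · rintro ⟨F, hF, hωF⟩
    have key : ∀ k : ℕ, F ⊆ (box P)^[k + 1] E := by
      intro k
      induction k with
      | zero => exact hF.trans (box_mono _ _ inter_subset_left)
      | succ n ih =>
        rw [Function.iterate_succ_apply']
        exact hF.trans (box_mono _ _ (inter_subset_right.trans ih))
    exact mem_iInter.mpr fun k => key k hωF
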